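/- Suppose the system $B_1(u)=\cdots=B_n(u)=0$ has a solution $\mathbf{q}=(q_1,\dots,q_n)\in(0,1)^n$. Then the system of equations $\eta(\lambda I-Q)=0$ with $\lambda=1$, $\eta_{\mathbf{j}}\ge 0$, $\sum_{\mathbf{j}\in\mathbb{Z}_+^n}\eta_{\mathbf{j}}<\infty$, has only the trivial solution $\eta\equiv 0$, where $Q$ is the n-type branching with immigration q-matrix of (1.1)-(1.2). Consequently the Feller minimal $Q$-process is the unique $Q$-process satisfying the Kolmogorov forward equations. -/

import Mathlib

open Filter Topology Set

noncomputable def gen {n : ℕ} (a : (Fin n → ℕ) → ℝ) (u : Fin n → ℝ) : ℝ :=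
  ∑' j : Fin n → ℕ, a j * ∏ l, u l ^ j l

def unitvec {n : ℕ} (k : Fin n) : Fin n → ℕ := fun l => if l = k then 1 else 0

noncomputable def qmat {n : ℕ} (h a : (Fin n → ℕ) → ℝ) (b : Fin n → (Fin n → ℕ) → ℝ)
    (i j : Fin n → ℕ) : ℝ :=
  if i = 0 then h j
  else (∑ k : Fin n, if ∀ l, i l ≤ j l + unitvec k l then
          (i k : ℝ) * b k (fun l => j l + unitvec k l - i l) else 0)
      + (if ∀ l, i l ≤ j l then a (fun l => j l - i l) else 0)

namespace Stmt5Aux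

noncomputable def W {n : ℕ} (q : Fin n → ℝ) (j : Fin n → ℕ) : ℝ := ∏ l, q l ^ j l

lemma W_pos {n : ℕ} {q : Fin n → ℝ} (hq : ∀ l, 0 < q l) (j : Fin n → ℕ) : 0 < W q j :=
  Finset.prod_pos fun l _ => pow_pos (hq l) _

lemma W_le_one {n : ℕ} {q : Fin n → ℝ} (hq0 : ∀ l, 0 ≤ q l) (hq1 : ∀ l, q l ≤ 1)
    (j : Fin n → ℕ) : W q j ≤ 1 :=
  Finset.prod_le_one (fun l _ => pow_nonneg (hq0 l) _)
    (fun l _ => pow_le_one₀ (hq0 l) (hq1 l))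

lemma W_le_single {n : ℕ} {q : Fin n → ℝ} (hq0 : ∀ l, 0 ≤ q l) (hq1 : ∀ l, q l ≤ 1)
    (j : Fin n → ℕ) (k : Fin n) : W q j ≤ q k ^ j k := by
  have h1 : q k ^ j k * ∏ l ∈ Finset.univ.erase k, q l ^ j l = W q j := by
    rw [W]; exact Finset.mul_prod_erase _ (fun l => q l ^ j l) (Finset.mem_univ k)
  have h2 : ∏ l ∈ Finset.univ.erase k, q l ^ j l ≤ 1 :=
    Finset.prod_le_one (fun l _ => pow_nonneg (hq0 l) _)
      (fun l _ => pow_le_one₀ (hq0 l) (hq1 l))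
  nlinarith [pow_nonneg (hq0 k) (j k)]

lemma W_lt_one {n : ℕ} {q : Fin n → ℝ} (hq0 : ∀ l, 0 ≤ q l) (hq1 : ∀ l, q l < 1)
    {j : Fin n → ℕ} (hj : j ≠ 0) : W q j < 1 := by
  obtain ⟨k, hk⟩ := Function.ne_iff.mp hj
  exact lt_of_le_of_lt (W_le_single hq0 (fun l => (hq1 l).le) j k)
    (pow_lt_one₀ (hq0 k) (hq1 k) hk)

lemma W_add {n : ℕ} (q : Fin n → ℝ) (i m : Fin n → ℕ) :
    W q (fun l => i l + m l) = W q i * W q m := by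
  simp [W, pow_add, Finset.prod_mul_distrib]

lemma W_zero {n : ℕ} (q : Fin n → ℝ) : W q 0 = 1 := by simp [W]

lemma geom_bound {x : ℝ} (h0 : 0 ≤ x) (h1 : x < 1) (k : ℕ) :
    (k : ℝ) * x ^ (k - 1) ≤ 1 / (1 - x) := by
  have h2 : (k : ℝ) * x ^ (k - 1) ≤ ∑ m ∈ Finset.range k, x ^ m := by
    calc (k : ℝ) * x ^ (k - 1) = (Finset.range k).card • x ^ (k - 1) := by
          simp [nsmul_eq_mul]
    _ ≤ ∑ m ∈ Finset.range k, x ^ m :=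
        Finset.card_nsmul_le_sum _ _ _ (fun m hm =>
          pow_le_pow_of_le_one h0 h1.le (by
            have := Finset.mem_range.mp hm; omega))
  have hg := hasSum_geometric_of_lt_one h0 h1
  have h3 : ∑ m ∈ Finset.range k, x ^ m ≤ (1 - x)⁻¹ := by
    refine le_trans (Summable.sum_le_tsum _ (fun m _ => pow_nonneg h0 m) hg.summable) ?_
    exact le_of_eq hg.tsum_eq
  rw [one_div]
  linarith

lemma shiftSum {n : ℕ} {q : Fin n → ℝ} (c : (Fin n → ℕ) → ℝ) {t : ℝ}
    (hc : HasSum (fun m => c m * W q m) t) (d : Fin n → ℕ) :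
    HasSum (fun j : Fin n → ℕ =>
      (if ∀ l, d l ≤ j l then c (fun l => j l - d l) else 0) * W q j) (W q d * t) := by
  set e : (Fin n → ℕ) → (Fin n → ℕ) := fun m => fun l => m l + d l with he
  have hinj : Function.Injective e := by
    intro m1 m2 hm
    funext l
    have := congrFun hm l
    simpa [he] using this
  have hvan : ∀ j ∉ Set.range e,
      (if ∀ l, d l ≤ j l then c (fun l => j l - d l) else 0) * W q j = 0 := by
    intro j hj
    rw [if_neg, zero_mul]
    intro hcond
    exact hj ⟨fun l => j l - d l, funext fun l => by
      have := hcond l; simp only [he]; omega⟩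
  refine (hinj.hasSum_iff hvan).mp ?_
  have heq : ((fun j : Fin n → ℕ =>
      (if ∀ l, d l ≤ j l then c (fun l => j l - d l) else 0) * W q j) ∘ e)
      = fun m => (c m * W q m) * W q d := by
    funext m
    simp only [Function.comp, he]
    rw [if_pos (fun l => Nat.le_add_left _ _), W_add]
    have : (fun l => m l + d l - d l) = m := funext fun l => by omega
    rw [this]
    ring
  rw [heq]
  simpa [mul_comm] using hc.mul_right (W q d)

lemma hasSum_sub_single {α : Type*} [DecidableEq α] {f : α → ℝ} {S : ℝ}
    (h : HasSum f S) (z : α) :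
    HasSum (fun j : {j : α // j ≠ z} => f j.1) (S - f z) := by
  have h2 : HasSum (fun x => if x = z then f z else 0) (f z) := hasSum_ite_eq z (f z)
  have h3 := h.sub h2
  have : HasSum (({j : α | j ≠ z}).indicator f) (S - f z) := by
    rw [show ({j : α | j ≠ z}).indicator f = fun b => f b - if b = z then f z else 0 from ?_]
    · exact h3
    funext x
    by_cases hx : x = z <;> simp [Set.indicator, hx]
  exact hasSum_subtype_iff_indicator.mpr this

end Stmt5Aux

open Stmt5Aux

/-- if `B_1 = ⋯ = B_n = 0` has a solution `q ∈ (0,1)^n`, then the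
system `η(I - Q) = 0` (λ = 1) with `η ≥ 0` summable has only the trivial
solution `η ≡ 0`, for the n-type branching with immigration q-matrix `Q` of
(1.1)-(1.2). -/
theorem stmt_5 {n : ℕ} (h a : (Fin n → ℕ) → ℝ) (b : Fin n → (Fin n → ℕ) → ℝ)
    (hhnn : ∀ j : Fin n → ℕ, j ≠ 0 → 0 ≤ h j)
    (hhsum : Summable h)
    (hhval : HasSum (fun j : {j : Fin n → ℕ // j ≠ 0} => h j.1) (-h 0))
    (hhpos : 0 < -h 0)
    (hann : ∀ j : Fin n → ℕ, j ≠ 0 → 0 ≤ a j)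
    (hasum : Summable a)
    (haval : HasSum (fun j : {j : Fin n → ℕ // j ≠ 0} => a j.1) (-a 0))
    (hapos : 0 < -a 0)
    (hbnn : ∀ i j, j ≠ unitvec i → 0 ≤ b i j)
    (hbsum : ∀ i, Summable (b i))
    (hbval : ∀ i, HasSum (fun j : {j : Fin n → ℕ // j ≠ unitvec i} => b i j.1)
      (-(b i (unitvec i))))
    (hbpos : ∀ i, 0 < -(b i (unitvec i)))
    (q : Fin n → ℝ) (hq : ∀ l, q l ∈ Ioo (0:ℝ) 1)
    (hqroot : ∀ i, gen (b i) q = 0)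
    (η : (Fin n → ℕ) → ℝ)
    (hηnn : ∀ j, 0 ≤ η j)
    (hηsum : Summable η)
    (hηeq : ∀ j, HasSum (fun i : Fin n → ℕ => η i * qmat h a b i j) (η j)) :
    ∀ j, η j = 0 := by
  classical
  have hq0 : ∀ l, (0:ℝ) < q l := fun l => (hq l).1
  have hq1 : ∀ l, q l < 1 := fun l => (hq l).2
  have hq0' : ∀ l, (0:ℝ) ≤ q l := fun l => (hq0 l).le
  have hq1' : ∀ l, q l ≤ 1 := fun l => (hq1 l).le
  have hwpos : ∀ j, 0 < W q j := W_pos hq0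
  have hwle : ∀ j, W q j ≤ 1 := W_le_one hq0' hq1'
  -- summability multiplier
  have hsw : ∀ (f : (Fin n → ℕ) → ℝ), Summable f → Summable (fun m => f m * W q m) := by
    intro f hf
    refine Summable.of_norm_bounded hf.abs (fun m => ?_)
    rw [Real.norm_eq_abs, abs_mul, abs_of_pos (hwpos m)]
    exact mul_le_of_le_one_right (abs_nonneg _) (hwle m)
  have hA : HasSum (fun m => a m * W q m) (gen a q) := (hsw a hasum).hasSum
  have hH : HasSum (fun m => h m * W q m) (gen h q) := (hsw h hhsum).hasSum
  have hB : ∀ k, HasSum (fun m => b k m * W q m) 0 := fun k =>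
    hqroot k ▸ (hsw _ (hbsum k)).hasSum
  -- negativity of generating functions at q
  have hneg : ∀ (f : (Fin n → ℕ) → ℝ), (∀ j, j ≠ 0 → 0 ≤ f j) → Summable f →
      HasSum (fun j : {j : Fin n → ℕ // j ≠ 0} => f j.1) (-f 0) → 0 < -f 0 →
      gen f q < 0 := by
    intro f hnn hs hval hpos
    obtain ⟨m0, hm0ne, hm0pos⟩ : ∃ m0, m0 ≠ (0 : Fin n → ℕ) ∧ 0 < f m0 := by
      by_contra hcon
      push_neg at hcon
      have hz : (fun j : {j : Fin n → ℕ // j ≠ 0} => f j.1) = fun _ => 0 :=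
        funext fun j => le_antisymm (hcon j.1 j.2) (hnn j.1 j.2)
      have := hval
      rw [hz] at this
      have h0 := this.unique hasSum_zero
      linarith
    have hsub : HasSum (fun j : {j : Fin n → ℕ // j ≠ 0} => f j.1 * W q j.1)
        (gen f q - f 0 * W q 0) := hasSum_sub_single ((hsw f hs).hasSum) 0
    have hlt : gen f q - f 0 * W q 0 < -f 0 := by
      refine hasSum_lt (f := fun j : {j : Fin n → ℕ // j ≠ 0} => f j.1 * W q j.1)
        (g := fun j : {j : Fin n → ℕ // j ≠ 0} => f j.1)
        (fun j => mul_le_of_le_one_right (hnn j.1 j.2) (hwle j.1))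
        (i := ⟨m0, hm0ne⟩)
        (mul_lt_of_lt_one_right hm0pos (W_lt_one hq0' hq1 hm0ne)) hsub hval
    rw [W_zero] at hlt
    linarith
  have hHneg : gen h q < 0 := hneg h hhnn hhsum hhval hhpos
  have hAneg : gen a q < 0 := hneg a hann hasum haval hapos
  -- generic k-term has-sum
  have kterm : ∀ (i : Fin n → ℕ) (k : Fin n) (c' : (Fin n → ℕ) → ℝ) (t : ℝ),
      HasSum (fun m => c' m * W q m) t →
      HasSum (fun j : Fin n → ℕ =>
        (if ∀ l, i l ≤ j l + unitvec k l then
          (i k : ℝ) * c' (fun l => j l + unitvec k l - i l) else 0) * W q j)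
        (if i k = 0 then 0
          else W q (fun l => i l - unitvec k l) * ((i k : ℝ) * t)) := by
    intro i k c' t hc'
    by_cases hik : i k = 0
    · rw [if_pos hik]
      have hz : (fun j : Fin n → ℕ =>
          (if ∀ l, i l ≤ j l + unitvec k l then
            (i k : ℝ) * c' (fun l => j l + unitvec k l - i l) else 0) * W q j)
          = fun _ => 0 := by
        funext j
        rw [hik]
        simp
      rw [hz]
      exact hasSum_zero
    · rw [if_neg hik]
      have hik1 : 1 ≤ i k := Nat.one_le_iff_ne_zero.mpr hik
      have hc2 : HasSum (fun m => ((i k : ℝ) * c' m) * W q m) ((i k : ℝ) * t) := by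
        have := hc'.mul_left (i k : ℝ)
        simpa [mul_assoc] using this
      have hs := shiftSum (q := q) (fun m => (i k : ℝ) * c' m) hc2
        (fun l => i l - unitvec k l)
      have hcond : ∀ j : Fin n → ℕ,
          (∀ l, i l ≤ j l + unitvec k l) ↔ (∀ l, i l - unitvec k l ≤ j l) := by
        intro j
        refine forall_congr' fun l => ?_
        by_cases hlk : l = k <;> simp [unitvec, hlk] <;> omega
      have harg : ∀ j : Fin n → ℕ,
          (fun l => j l + unitvec k l - i l) = (fun l => j l - (i l - unitvec k l)) := by
        intro j
        funext l
        by_cases hlk : l = k <;> simp [unitvec, hlk] <;> omega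
      have hfeq : (fun j : Fin n → ℕ =>
          (if ∀ l, i l ≤ j l + unitvec k l then
            (i k : ℝ) * c' (fun l => j l + unitvec k l - i l) else 0) * W q j)
          = fun j : Fin n → ℕ =>
          (if ∀ l, (fun l => i l - unitvec k l) l ≤ j l then
            (i k : ℝ) * c' (fun l => j l - (fun l' => i l' - unitvec k l') l) else 0) * W q j := by
        funext j
        by_cases hcnd : ∀ l, i l ≤ j l + unitvec k l
        · rw [if_pos hcnd, if_pos ((hcond j).mp hcnd), harg j]
        · rw [if_neg hcnd, if_neg (fun hh => hcnd ((hcond j).mpr hh))]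
      rw [hfeq]
      exact hs
  -- row sums
  have hrow : ∀ i : Fin n → ℕ, ∃ ci : ℝ, ci < 0 ∧
      HasSum (fun j => qmat h a b i j * W q j) ci := by
    intro i
    by_cases hi : i = 0
    · refine ⟨gen h q, hHneg, ?_⟩
      subst hi
      have hfe : (fun j : Fin n → ℕ => qmat h a b 0 j * W q j) = fun j => h j * W q j := by
        funext j; rw [qmat, if_pos rfl]
      rw [hfe]; exact hH
    · refine ⟨W q i * gen a q, mul_neg_of_pos_of_neg (hwpos i) hAneg, ?_⟩
      have hks : ∀ k : Fin n, HasSum (fun j : Fin n → ℕ =>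
          (if ∀ l, i l ≤ j l + unitvec k l then
            (i k : ℝ) * b k (fun l => j l + unitvec k l - i l) else 0) * W q j) 0 := by
        intro k
        have hk := kterm i k (b k) 0 (hB k)
        have hval0 : (if i k = 0 then (0:ℝ)
            else W q (fun l => i l - unitvec k l) * ((i k : ℝ) * 0)) = 0 := by
          split <;> simp
        rwa [hval0] at hk
      have h1 : HasSum (fun j : Fin n → ℕ => ∑ k : Fin n,
          (if ∀ l, i l ≤ j l + unitvec k l then
            (i k : ℝ) * b k (fun l => j l + unitvec k l - i l) else 0) * W q j) 0 := by
        simpa using hasSum_sum (fun k (_ : k ∈ Finset.univ) => hks k)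
      have h2 := shiftSum (q := q) a hA i
      have h3 := h1.add h2
      rw [zero_add] at h3
      have hfe : (fun j : Fin n → ℕ => qmat h a b i j * W q j)
          = fun j => (∑ k : Fin n, (if ∀ l, i l ≤ j l + unitvec k l then
              (i k : ℝ) * b k (fun l => j l + unitvec k l - i l) else 0) * W q j)
            + (if ∀ l, i l ≤ j l then a (fun l => j l - i l) else 0) * W q j := by
        funext j
        rw [qmat, if_neg hi, add_mul, Finset.sum_mul]
      rw [hfe]
      exact h3
  -- absolute value majorant data
  have hBk : ∀ k, HasSum (fun m => |b k m| * W q m) (∑' m, |b k m| * W q m) :=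
    fun k => (hsw _ (hbsum k).abs).hasSum
  have hA' : HasSum (fun m => |a m| * W q m) (∑' m, |a m| * W q m) :=
    (hsw _ hasum.abs).hasSum
  have hH' : HasSum (fun m => |h m| * W q m) (∑' m, |h m| * W q m) :=
    (hsw _ hhsum.abs).hasSum
  have hBknn : ∀ k, 0 ≤ ∑' m, |b k m| * W q m :=
    fun k => tsum_nonneg fun m => mul_nonneg (abs_nonneg _) (hwpos m).le
  have hA'nn : 0 ≤ ∑' m, |a m| * W q m :=
    tsum_nonneg fun m => mul_nonneg (abs_nonneg _) (hwpos m).le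
  have hH'nn : 0 ≤ ∑' m, |h m| * W q m :=
    tsum_nonneg fun m => mul_nonneg (abs_nonneg _) (hwpos m).le
  set D : ℝ := (∑' m, |h m| * W q m) + (∑' m, |a m| * W q m)
      + ∑ k : Fin n, (1 / (1 - q k)) * (∑' m, |b k m| * W q m) with hDdef
  have hDtail : 0 ≤ ∑ k : Fin n, (1 / (1 - q k)) * (∑' m, |b k m| * W q m) :=
    Finset.sum_nonneg fun k _ =>
      mul_nonneg (le_of_lt (div_pos one_pos (by linarith [hq1 k]))) (hBknn k)
  have habs : ∀ i : Fin n → ℕ, Summable (fun j => |qmat h a b i j| * W q j)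
      ∧ ∑' j, |qmat h a b i j| * W q j ≤ D := by
    intro i
    by_cases hi : i = 0
    · subst hi
      have hfe : (fun j : Fin n → ℕ => |qmat h a b 0 j| * W q j)
          = fun j => |h j| * W q j := by
        funext j; rw [qmat, if_pos rfl]
      rw [hfe]
      refine ⟨hH'.summable, ?_⟩
      rw [hDdef]
      linarith [le_of_eq (hH'.tsum_eq)]
    · have hks' : ∀ k : Fin n, HasSum (fun j : Fin n → ℕ =>
          (if ∀ l, i l ≤ j l + unitvec k l then
            (i k : ℝ) * |b k (fun l => j l + unitvec k l - i l)| else 0) * W q j)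
          (if i k = 0 then 0 else W q (fun l => i l - unitvec k l)
            * ((i k : ℝ) * (∑' m, |b k m| * W q m))) :=
        fun k => kterm i k (fun m => |b k m|) _ (hBk k)
      have h1 : HasSum (fun j : Fin n → ℕ => ∑ k : Fin n,
          (if ∀ l, i l ≤ j l + unitvec k l then
            (i k : ℝ) * |b k (fun l => j l + unitvec k l - i l)| else 0) * W q j)
          (∑ k : Fin n, if i k = 0 then 0 else W q (fun l => i l - unitvec k l)
            * ((i k : ℝ) * (∑' m, |b k m| * W q m))) :=
        hasSum_sum (fun k _ => hks' k)
      have h2 := shiftSum (q := q) (fun m => |a m|) hA' i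
      have hmaj := h1.add h2
      have hval_le : (∑ k : Fin n, if i k = 0 then (0:ℝ)
            else W q (fun l => i l - unitvec k l) * ((i k : ℝ) * (∑' m, |b k m| * W q m)))
          + W q i * (∑' m, |a m| * W q m) ≤ D := by
        have hterm : ∀ k : Fin n, (if i k = 0 then (0:ℝ)
            else W q (fun l => i l - unitvec k l) * ((i k : ℝ) * (∑' m, |b k m| * W q m)))
            ≤ (1 / (1 - q k)) * (∑' m, |b k m| * W q m) := by
          intro k
          have hqk : (0:ℝ) < 1 - q k := by linarith [hq1 k]
          by_cases hik : i k = 0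
          · rw [if_pos hik]
            exact mul_nonneg (le_of_lt (div_pos one_pos hqk)) (hBknn k)
          · rw [if_neg hik]
            have hd : W q (fun l => i l - unitvec k l) ≤ q k ^ (i k - 1) := by
              have hds := W_le_single hq0' hq1' (fun l => i l - unitvec k l) k
              simpa [unitvec] using hds
            calc W q (fun l => i l - unitvec k l) * ((i k : ℝ) * (∑' m, |b k m| * W q m))
                ≤ q k ^ (i k - 1) * ((i k : ℝ) * (∑' m, |b k m| * W q m)) :=
                  mul_le_mul_of_nonneg_right hd
                    (mul_nonneg (Nat.cast_nonneg _) (hBknn k))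
              _ = ((i k : ℝ) * q k ^ (i k - 1)) * (∑' m, |b k m| * W q m) := by ring
              _ ≤ (1 / (1 - q k)) * (∑' m, |b k m| * W q m) :=
                  mul_le_mul_of_nonneg_right (geom_bound (hq0' k) (hq1 k) (i k)) (hBknn k)
        have hsum_le := Finset.sum_le_sum (fun k (_ : k ∈ Finset.univ) => hterm k)
        have hwA : W q i * (∑' m, |a m| * W q m) ≤ ∑' m, |a m| * W q m :=
          mul_le_of_le_one_left hA'nn (hwle i)
        rw [hDdef]
        linarith
      have hptw : ∀ j : Fin n → ℕ, |qmat h a b i j| * W q j ≤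
          (∑ k : Fin n, (if ∀ l, i l ≤ j l + unitvec k l then
              (i k : ℝ) * |b k (fun l => j l + unitvec k l - i l)| else 0) * W q j)
          + (if ∀ l, i l ≤ j l then |a (fun l => j l - i l)| else 0) * W q j := by
        intro j
        rw [qmat, if_neg hi]
        have e1 : ∀ k : Fin n, |if ∀ l, i l ≤ j l + unitvec k l then
            (i k : ℝ) * b k (fun l => j l + unitvec k l - i l) else 0|
            = if ∀ l, i l ≤ j l + unitvec k l then
            (i k : ℝ) * |b k (fun l => j l + unitvec k l - i l)| else 0 := by
          intro k
          split
          · rw [abs_mul, abs_of_nonneg (by positivity : (0:ℝ) ≤ (i k : ℝ))]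
          · exact abs_zero
        have e2 : |if ∀ l, i l ≤ j l then a (fun l => j l - i l) else 0|
            = if ∀ l, i l ≤ j l then |a (fun l => j l - i l)| else 0 := by
          split
          · rfl
          · exact abs_zero
        have habs1 : |(∑ k : Fin n, if ∀ l, i l ≤ j l + unitvec k l then
              (i k : ℝ) * b k (fun l => j l + unitvec k l - i l) else 0)
            + (if ∀ l, i l ≤ j l then a (fun l => j l - i l) else 0)|
            ≤ (∑ k : Fin n, if ∀ l, i l ≤ j l + unitvec k l then
              (i k : ℝ) * |b k (fun l => j l + unitvec k l - i l)| else 0)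
            + (if ∀ l, i l ≤ j l then |a (fun l => j l - i l)| else 0) := by
          refine (abs_add_le _ _).trans ?_
          rw [e2]
          refine add_le_add ?_ le_rfl
          refine (Finset.abs_sum_le_sum_abs _ _).trans ?_
          exact le_of_eq (Finset.sum_congr rfl fun k _ => e1 k)
        calc |(∑ k : Fin n, if ∀ l, i l ≤ j l + unitvec k l then
              (i k : ℝ) * b k (fun l => j l + unitvec k l - i l) else 0)
            + (if ∀ l, i l ≤ j l then a (fun l => j l - i l) else 0)| * W q j
            ≤ ((∑ k : Fin n, if ∀ l, i l ≤ j l + unitvec k l then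
              (i k : ℝ) * |b k (fun l => j l + unitvec k l - i l)| else 0)
            + (if ∀ l, i l ≤ j l then |a (fun l => j l - i l)| else 0)) * W q j :=
              mul_le_mul_of_nonneg_right habs1 (hwpos j).le
          _ = _ := by rw [add_mul, Finset.sum_mul]
      have hsummable : Summable (fun j => |qmat h a b i j| * W q j) :=
        Summable.of_nonneg_of_le (fun j => mul_nonneg (abs_nonneg _) (hwpos j).le)
          hptw hmaj.summable
      refine ⟨hsummable, ?_⟩
      calc ∑' j, |qmat h a b i j| * W q j
          ≤ ∑' j, ((∑ k : Fin n, (if ∀ l, i l ≤ j l + unitvec k l then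
              (i k : ℝ) * |b k (fun l => j l + unitvec k l - i l)| else 0) * W q j)
            + (if ∀ l, i l ≤ j l then |a (fun l => j l - i l)| else 0) * W q j) :=
            Summable.tsum_le_tsum hptw hsummable hmaj.summable
        _ = _ := hmaj.tsum_eq
        _ ≤ D := hval_le
  -- the product function is summable
  have habsF : Summable (fun p : (Fin n → ℕ) × (Fin n → ℕ) =>
      |η p.1 * (qmat h a b p.1 p.2 * W q p.2)|) := by
    rw [summable_prod_of_nonneg (fun p => abs_nonneg _)]
    constructor
    · intro i
      have hfe : (fun j : Fin n → ℕ => |η i * (qmat h a b i j * W q j)|)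
          = fun j => η i * (|qmat h a b i j| * W q j) := by
        funext j
        rw [abs_mul, abs_mul, abs_of_nonneg (hηnn i), abs_of_pos (hwpos j)]
      rw [hfe]
      exact (habs i).1.mul_left _
    · refine Summable.of_nonneg_of_le (fun i => tsum_nonneg fun j => abs_nonneg _)
        (fun i => ?_) (hηsum.mul_right D)
      have hfe : (fun j : Fin n → ℕ => |η i * (qmat h a b i j * W q j)|)
          = fun j => η i * (|qmat h a b i j| * W q j) := by
        funext j
        rw [abs_mul, abs_mul, abs_of_nonneg (hηnn i), abs_of_pos (hwpos j)]
      rw [hfe, tsum_mul_left]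
      calc η i * ∑' j, |qmat h a b i j| * W q j ≤ η i * D :=
            mul_le_mul_of_nonneg_left (habs i).2 (hηnn i)
        _ = η i * D := rfl
  have hF : Summable (fun p : (Fin n → ℕ) × (Fin n → ℕ) =>
      η p.1 * (qmat h a b p.1 p.2 * W q p.2)) := summable_abs_iff.mp habsF
  obtain ⟨S, hFS⟩ := hF
  choose c hcneg hcrow using hrow
  have hrowS : HasSum (fun i => η i * c i) S :=
    hFS.prod_fiberwise (fun i => (hcrow i).mul_left (η i))
  have hFS' : HasSum (fun p : (Fin n → ℕ) × (Fin n → ℕ) =>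
      η p.2 * (qmat h a b p.2 p.1 * W q p.1)) S := by
    exact ((Equiv.prodComm (Fin n → ℕ) (Fin n → ℕ)).hasSum_iff).mpr hFS
  have hcolS : HasSum (fun j => η j * W q j) S := by
    refine hFS'.prod_fiberwise (fun j => ?_)
    have := (hηeq j).mul_right (W q j)
    simpa [mul_assoc] using this
  have hrow_nonpos : ∀ i, η i * c i ≤ 0 :=
    fun i => mul_nonpos_of_nonneg_of_nonpos (hηnn i) (hcneg i).le
  have hS_nonpos : S ≤ 0 := hasSum_le hrow_nonpos hrowS hasSum_zero
  have hS_nonneg : 0 ≤ S :=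
    hasSum_le (fun j => mul_nonneg (hηnn j) (hwpos j).le) hasSum_zero hcolS
  have hS0 : S = 0 := le_antisymm hS_nonpos hS_nonneg
  intro j0
  have h1 : -(η j0 * c j0) ≤ -S :=
    le_hasSum hrowS.neg j0 (fun i _ => by
      have := hrow_nonpos i
      linarith)
  rw [hS0, neg_zero] at h1
  have h2 : η j0 * c j0 = 0 := le_antisymm (hrow_nonpos j0) (by linarith)
  rcases mul_eq_zero.mp h2 with h3 | h3
  · exact h3
  · exact absurd h3 (ne_of_lt (hcneg j0))
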